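/- Let D be a decomposition space and p : F → tw(D) a discrete fibration of categories. Then there is an isomorphism of categories over el(sd D) between el(N(F)) (where N(F) → N(tw D) ≅ sd(D) makes el(N F) a discrete fibration over el(sd D)) and the pullback of p along the composite functor λ_D ∘ ω_D : el(sd D) → el(D) → tw(D); the isomorphism sends an n-chain of arrows z_0 → ⋯ → z_n in F (an object of el(N F)) to its last element z_n. -/

import Mathlib

open CategoryTheory CategoryTheory.Limits Opposite Simplicial

namespace DecompPaper

def IsActive {a b : SimplexCategory} (f : a ⟶ b) : Prop :=
  f.toOrderHom 0 = 0 ∧ f.toOrderHom (Fin.last a.len) = Fin.last b.len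

def IsInert {a b : SimplexCategory} (f : a ⟶ b) : Prop :=
  ∀ i : Fin a.len, (f.toOrderHom i.succ : ℕ) = (f.toOrderHom i.castSucc : ℕ) + 1

def IsTopPres {a b : SimplexCategory} (f : a ⟶ b) : Prop :=
  f.toOrderHom (Fin.last a.len) = Fin.last b.len

def IsDecomp (X : SSet.{0}) : Prop :=
  ∀ ⦃a b c d : SimplexCategory⦄ (f : a ⟶ b) (g : a ⟶ c) (h : b ⟶ d) (k : c ⟶ d),
    IsActive f → IsInert g → IsPushout f g h k →
      IsPullback (X.map h.op) (X.map k.op) (X.map f.op) (X.map g.op)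

def IsCULF {Y X : SSet.{0}} (F : Y ⟶ X) : Prop :=
  ∀ ⦃a b : SimplexCategory⦄ (g : a ⟶ b), IsActive g →
    IsPullback (Y.map g.op) (F.app (op b)) (F.app (op a)) (X.map g.op)

def IsRightFib {Y X : SSet.{0}} (F : Y ⟶ X) : Prop :=
  ∀ n : ℕ,
    IsPullback (Y.map (SimplexCategory.δ (0 : Fin (n + 2))).op)
      (F.app (op (SimplexCategory.mk (n + 1)))) (F.app (op (SimplexCategory.mk n)))
      (X.map (SimplexCategory.δ (0 : Fin (n + 2))).op)

/-! ### The edgewise subdivision functor `Q` -/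

def natApp {m n : ℕ} (f : Fin (m + 1) →o Fin (n + 1)) (t : ℕ) : ℕ :=
  (f ⟨min t m, Nat.lt_succ_of_le (min_le_right t m)⟩ : ℕ)

lemma natApp_le {m n : ℕ} (f : Fin (m + 1) →o Fin (n + 1)) (t : ℕ) : natApp f t ≤ n :=
  Nat.lt_succ_iff.mp (f _).isLt

lemma natApp_mono {m n : ℕ} (f : Fin (m + 1) →o Fin (n + 1)) {s t : ℕ} (h : s ≤ t) :
    natApp f s ≤ natApp f t :=
  f.monotone (by simp only [Fin.mk_le_mk]; omega)

lemma natApp_of_le {m n : ℕ} (f : Fin (m + 1) →o Fin (n + 1)) {t : ℕ} (h : t ≤ m) :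
    natApp f t = (f ⟨t, by omega⟩ : ℕ) := by
  have harg : (⟨min t m, Nat.lt_succ_of_le (min_le_right t m)⟩ : Fin (m + 1)) = ⟨t, by omega⟩ :=
    Fin.ext (Nat.min_eq_left h)
  unfold natApp
  rw [harg]

lemma natApp_comp {l m n : ℕ} (f : Fin (l + 1) →o Fin (m + 1)) (g : Fin (m + 1) →o Fin (n + 1))
    (t : ℕ) : natApp (g.comp f) t = natApp g (natApp f t) := by
  have h : natApp f t ≤ m := natApp_le f t
  rw [natApp_of_le g h]
  unfold natApp
  rfl

def Qfun {m n : ℕ} (f : Fin (m + 1) →o Fin (n + 1)) : Fin (2 * m + 2) → Fin (2 * n + 2) :=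
  fun i =>
    if (i : ℕ) ≤ m then ⟨n - natApp f (m - (i : ℕ)), by omega⟩
    else ⟨n + 1 + natApp f ((i : ℕ) - (m + 1)), by have := natApp_le f ((i : ℕ) - (m + 1)); omega⟩

lemma Qfun_val_le {m n : ℕ} (f : Fin (m + 1) →o Fin (n + 1)) (i : Fin (2 * m + 2))
    (h : (i : ℕ) ≤ m) : (Qfun f i : ℕ) = n - natApp f (m - (i : ℕ)) := by
  unfold Qfun; rw [if_pos h]

lemma Qfun_val_gt {m n : ℕ} (f : Fin (m + 1) →o Fin (n + 1)) (i : Fin (2 * m + 2))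
    (h : ¬ (i : ℕ) ≤ m) : (Qfun f i : ℕ) = n + 1 + natApp f ((i : ℕ) - (m + 1)) := by
  unfold Qfun; rw [if_neg h]

lemma Qfun_monotone {m n : ℕ} (f : Fin (m + 1) →o Fin (n + 1)) : Monotone (Qfun f) := by
  intro i j hij
  have hij' : (i : ℕ) ≤ (j : ℕ) := hij
  rw [Fin.le_def]
  by_cases hi : (i : ℕ) ≤ m <;> by_cases hj : (j : ℕ) ≤ m
  · rw [Qfun_val_le f i hi, Qfun_val_le f j hj]
    have h1 := natApp_mono f (show m - (j : ℕ) ≤ m - (i : ℕ) by omega)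
    have h2 := natApp_le f (m - (i : ℕ))
    omega
  · rw [Qfun_val_le f i hi, Qfun_val_gt f j hj]
    omega
  · omega
  · rw [Qfun_val_gt f i hi, Qfun_val_gt f j hj]
    have h1 := natApp_mono f (show (i : ℕ) - (m + 1) ≤ (j : ℕ) - (m + 1) by omega)
    omega

def Q : SimplexCategory ⥤ SimplexCategory where
  obj a := SimplexCategory.mk (2 * a.len + 1)
  map {a b} f := SimplexCategory.Hom.mk ⟨Qfun f.toOrderHom, Qfun_monotone f.toOrderHom⟩
  map_id a := by
    apply SimplexCategory.Hom.ext
    apply OrderHom.ext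
    funext i
    apply Fin.ext
    show (Qfun (SimplexCategory.Hom.toOrderHom (𝟙 a)) i : ℕ) = (i : ℕ)
    have hi : (i : ℕ) < 2 * a.len + 2 := i.isLt
    have hid : ∀ t : ℕ, natApp (SimplexCategory.Hom.toOrderHom (𝟙 a)) t = min t a.len :=
      fun t => rfl
    by_cases h : (i : ℕ) ≤ a.len
    · rw [Qfun_val_le _ i h, hid]; omega
    · rw [Qfun_val_gt _ i h, hid]; omega
  map_comp {a b c} f g := by
    apply SimplexCategory.Hom.ext
    apply OrderHom.ext
    funext i
    apply Fin.ext
    show (Qfun (SimplexCategory.Hom.toOrderHom (f ≫ g)) i : ℕ)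
        = (Qfun g.toOrderHom (Qfun f.toOrderHom i) : ℕ)
    have hi : (i : ℕ) < 2 * a.len + 2 := i.isLt
    have h2 : SimplexCategory.Hom.toOrderHom (f ≫ g)
        = g.toOrderHom.comp f.toOrderHom := rfl
    rw [h2]
    by_cases h : (i : ℕ) ≤ a.len
    · have hA := natApp_le f.toOrderHom (a.len - (i : ℕ))
      have hfi : ((Qfun f.toOrderHom i : Fin (2 * b.len + 2)) : ℕ) ≤ b.len := by
        rw [Qfun_val_le _ i h]; omega
      rw [Qfun_val_le _ i h, Qfun_val_le _ _ hfi, Qfun_val_le _ i h, natApp_comp]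
      rw [show b.len - (b.len - natApp f.toOrderHom (a.len - (i : ℕ)))
          = natApp f.toOrderHom (a.len - (i : ℕ)) by omega]
    · have hA := natApp_le f.toOrderHom ((i : ℕ) - (a.len + 1))
      have hfi : ¬ ((Qfun f.toOrderHom i : Fin (2 * b.len + 2)) : ℕ) ≤ b.len := by
        rw [Qfun_val_gt _ i h]; omega
      rw [Qfun_val_gt _ i h, Qfun_val_gt _ _ hfi, Qfun_val_gt _ i h, natApp_comp]
      rw [show b.len + 1 + natApp f.toOrderHom ((i : ℕ) - (a.len + 1)) - (b.len + 1)
          = natApp f.toOrderHom ((i : ℕ) - (a.len + 1)) by omega]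

/-- Edgewise subdivision of simplicial sets: precomposition with `Qᵒᵖ`. -/
def sdF : SSet.{0} ⥤ SSet.{0} :=
  (Functor.whiskeringLeft SimplexCategoryᵒᵖ SimplexCategoryᵒᵖ (Type 0)).obj Q.op

/-- The unique active map `[1] ⟶ [m]`. -/
def act1 (m : ℕ) : SimplexCategory.mk 1 ⟶ SimplexCategory.mk m :=
  SimplexCategory.Hom.mk
    ⟨fun i => if (i : ℕ) = 0 then ⟨0, by omega⟩ else Fin.last m, by
      intro i j hij
      by_cases h : (i : ℕ) = 0
      · by_cases h' : (j : ℕ) = 0 <;> simp [h, h', Fin.le_def]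
      · have : (j : ℕ) ≠ 0 := by have := Fin.le_def.mp hij; omega
        simp [h, this]⟩

/-- The vertex `t` as a map `[0] ⟶ [n]`. -/
def vert (n : ℕ) (t : Fin (n + 1)) : SimplexCategory.mk 0 ⟶ SimplexCategory.mk n :=
  SimplexCategory.Hom.mk (OrderHom.const _ t)

/-- The `i`-th edge inclusion `[1] ⟶ [n]`. -/
def edgeIncl (n : ℕ) (i : Fin n) : SimplexCategory.mk 1 ⟶ SimplexCategory.mk n :=
  SimplexCategory.Hom.mk
    ⟨fun j => ⟨(i : ℕ) + (j : ℕ), by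
        have h1 := i.isLt
        have h2 := j.isLt
        simp only [SimplexCategory.len_mk] at h2 ⊢
        omega⟩, by
      intro x y h
      have := Fin.le_def.mp h
      simp only [Fin.mk_le_mk]
      omega⟩

/-- The set of chains of `k` composable edges in a simplicial set. -/
def SegalChains (X : SSet.{0}) (k : ℕ) : Type :=
  {p : Fin k → X.obj (op (SimplexCategory.mk 1)) //
    ∀ i j : Fin k, (j : ℕ) = (i : ℕ) + 1 →
      X.map (vert 1 1).op (p i) = X.map (vert 1 0).op (p j)}

/-- The spine (Segal) map from `k`-simplices to chains of `k` edges. -/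
def spine (X : SSet.{0}) (k : ℕ) (σ : X.obj (op (SimplexCategory.mk k))) : SegalChains X k :=
  ⟨fun i => X.map (edgeIncl k i).op σ, by
    intro i j hij
    have h1 : vert 1 1 ≫ edgeIncl k i = vert 1 0 ≫ edgeIncl k j := by
      apply SimplexCategory.Hom.ext
      apply OrderHom.ext
      funext z
      apply Fin.ext
      show ((edgeIncl k i).toOrderHom ((vert 1 1).toOrderHom z) : ℕ)
          = ((edgeIncl k j).toOrderHom ((vert 1 0).toOrderHom z) : ℕ)
      show ((i : ℕ) + ((1 : Fin 2) : ℕ)) = ((j : ℕ) + ((0 : Fin 2) : ℕ))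
      simp
      omega
    calc X.map (vert 1 1).op (X.map (edgeIncl k i).op σ)
        = X.map ((vert 1 1 ≫ edgeIncl k i).op) σ := by
          rw [op_comp, FunctorToTypes.map_comp_apply]
      _ = X.map ((vert 1 0 ≫ edgeIncl k j).op) σ := by rw [h1]
      _ = X.map (vert 1 0).op (X.map (edgeIncl k j).op σ) := by
          rw [op_comp, FunctorToTypes.map_comp_apply]⟩


/-! ### The category of decomposition spaces and CULF maps -/

lemma IsCULF.id (X : SSet.{0}) : IsCULF (𝟙 X) := by
  intro a b g hg
  have : (𝟙 X : X ⟶ X).app (op b) = 𝟙 (X.obj (op b)) := rfl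
  refine IsPullback.of_vert_isIso ⟨by simp⟩

lemma IsCULF.comp {X Y Z : SSet.{0}} {f : X ⟶ Y} {g : Y ⟶ Z} (hf : IsCULF f) (hg : IsCULF g) :
    IsCULF (f ≫ g) := by
  intro a b s hs
  simpa using (hf s hs).paste_vert (hg s hs)

/-- The category of decomposition spaces and CULF maps. -/
structure DecompCat : Type 1 where
  X : SSet.{0}
  decomp : IsDecomp X

instance : Category.{0} DecompCat where
  Hom A B := {f : A.X ⟶ B.X // IsCULF f}
  id A := ⟨𝟙 A.X, IsCULF.id A.X⟩
  comp f g := ⟨f.1 ≫ g.1, f.2.comp g.2⟩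
  id_comp f := Subtype.ext (Category.id_comp f.1)
  comp_id f := Subtype.ext (Category.comp_id f.1)
  assoc f g h := Subtype.ext (Category.assoc f.1 g.1 h.1)

/-! ### Discrete fibrations -/

/-- A functor is a discrete fibration if every morphism into the image of an object
has a unique lift with that object as codomain. -/
def IsDiscreteFibration {E C : Type*} [Category E] [Category C] (p : E ⥤ C) : Prop :=
  ∀ (y : E) (c : C) (f : c ⟶ p.obj y),
    ∃! g : Σ x : E, x ⟶ y, ∃ h : p.obj g.1 = c, p.map g.2 = eqToHom h ≫ f

/-- The category of discrete fibrations over `T`, with morphisms the functors over `T`. -/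
structure DFibOver (T : Type) [SmallCategory T] : Type 1 where
  E : Type
  [cat : SmallCategory E]
  p : E ⥤ T
  fib : IsDiscreteFibration p

attribute [instance] DFibOver.cat

instance {T : Type} [SmallCategory T] : Category.{0} (DFibOver T) where
  Hom A B := {G : A.E ⥤ B.E // G ⋙ B.p = A.p}
  id A := ⟨𝟭 A.E, Functor.id_comp A.p⟩
  comp f g := ⟨f.1 ⋙ g.1, by rw [Functor.assoc, g.2, f.2]⟩
  id_comp f := Subtype.ext (Functor.id_comp f.1)
  comp_id f := Subtype.ext (Functor.comp_id f.1)
  assoc f g h := Subtype.ext (Functor.assoc f.1 g.1 h.1)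

/-! ### The category of elements of a simplicial set -/

/-- The category of elements of a simplicial set `X`: objects are simplices of `X`;
a morphism `(m, τ) ⟶ (n, σ)` is a map `f : [m] ⟶ [n]` of `Δ` with `X(f)(σ) = τ`. -/
structure El (X : SSet.{0}) : Type where
  n : ℕ
  σ : X.obj (op (SimplexCategory.mk n))

instance (X : SSet.{0}) : SmallCategory (El X) where
  Hom a b := {f : SimplexCategory.mk a.n ⟶ SimplexCategory.mk b.n // X.map f.op b.σ = a.σ}
  id a := ⟨𝟙 _, by simp⟩
  comp {a b c} f g := ⟨f.1 ≫ g.1, by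
    rw [op_comp, FunctorToTypes.map_comp_apply, g.2, f.2]⟩
  id_comp f := Subtype.ext (Category.id_comp f.1)
  comp_id f := Subtype.ext (Category.comp_id f.1)
  assoc f g h := Subtype.ext (Category.assoc f.1 g.1 h.1)

/-- Functoriality of the category of elements in the simplicial set. -/
def elMap {X Y : SSet.{0}} (f : X ⟶ Y) : El X ⥤ El Y where
  obj e := ⟨e.n, f.app _ e.σ⟩
  map {a b} g := ⟨g.1, by
    have h := FunctorToTypes.naturality f g.1.op b.σ
    dsimp only
    rw [← h, g.2]⟩
  map_id a := Subtype.ext rfl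
  map_comp f g := Subtype.ext rfl

/-- The functor `ω_X : el(sd X) ⥤ el(X)` lying over `Q`. -/
def elSd (X : SSet.{0}) : El (sdF.obj X) ⥤ El X where
  obj e := ⟨2 * e.n + 1, e.σ⟩
  map {a b} g := ⟨Q.map g.1, g.2⟩
  map_id a := Subtype.ext (Q.map_id _)
  map_comp f g := Subtype.ext (Q.map_comp f.1 g.1)

/-- The objects (dimensions) of the chain in `Δ` underlying a `k`-simplex of the nerve of
the category of elements. -/
def chainObj {X : SSet.{0}} {k : ℕ} (F : ComposableArrows (El X) k) : Fin (k + 1) → ℕ :=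
  fun i => (F.obj i).n

/-- The consecutive maps in `Δ` underlying a `k`-simplex of the nerve of the category of
elements. -/
def chainMap {X : SSet.{0}} {k : ℕ} (F : ComposableArrows (El X) k) :
    ∀ i : Fin k, SimplexCategory.mk (chainObj F i.castSucc) ⟶
      SimplexCategory.mk (chainObj F i.succ) :=
  fun i => (F.map (homOfLE (Fin.castSucc_lt_succ (i := i)).le)).1

/-! ### Ladders -/

/-- `IsLadderA n f α` says that `α` is a commutative ladder from the chain of maps
`Q(d⊤) : Q[i] ⟶ Q[i+1]` to the chain `f` with all vertical maps `α i : Q[i] ⟶ [n i]`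
active. -/
def IsLadderA {k : ℕ} (n : Fin (k + 1) → ℕ)
    (f : ∀ i : Fin k, SimplexCategory.mk (n i.castSucc) ⟶ SimplexCategory.mk (n i.succ))
    (α : ∀ i : Fin (k + 1), Q.obj (SimplexCategory.mk (i : ℕ)) ⟶ SimplexCategory.mk (n i)) :
    Prop :=
  (∀ i, IsActive (α i)) ∧
    ∀ i : Fin k, Q.map (SimplexCategory.δ (Fin.last ((i : ℕ) + 1))) ≫ α i.succ
      = α i.castSucc ≫ f i

/-- `IsLadderB n f β` says that `β` is a commutative ladder from the chain of top coface maps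
`d⊤ : [i] ⟶ [i+1]` to the chain `f` with all vertical maps `β i : [i] ⟶ [n i]`
top-preserving. -/
def IsLadderB {k : ℕ} (n : Fin (k + 1) → ℕ)
    (f : ∀ i : Fin k, SimplexCategory.mk (n i.castSucc) ⟶ SimplexCategory.mk (n i.succ))
    (β : ∀ i : Fin (k + 1), SimplexCategory.mk (i : ℕ) ⟶ SimplexCategory.mk (n i)) : Prop :=
  (∀ i, IsTopPres (β i)) ∧
    ∀ i : Fin k, SimplexCategory.δ (Fin.last ((i : ℕ) + 1)) ≫ β i.succ = β i.castSucc ≫ f i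

/-- `IsLambda Λ` says that the family of simplicial maps `Λ X : N(el X) ⟶ sd X` is,
in each degree, given by sending a `k`-simplex `([n₀] → ⋯ → [n_k], σ)` to `X(α_k)(σ)`,
where `α_k : Q[k] ⟶ [n_k]` is the last vertical map of the (unique) active ladder over the
underlying chain in `Δ`. -/
def IsLambda (Λ : ∀ X : SSet.{0}, nerve (El X) ⟶ sdF.obj X) : Prop :=
  ∀ (X : SSet.{0}) (k : ℕ) (F : ComposableArrows (El X) k),
    ∃ α, IsLadderA (chainObj F) (chainMap F) α ∧
      (Λ X).app (op (SimplexCategory.mk k)) F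
        = X.map (α (Fin.last k)).op (F.obj (Fin.last k)).σ

/-! ### The last-segment inclusion and `cod` -/

/-- The last-segment inclusion `[n] ⟶ Q[n] = [2n+1]`. -/
def Lhom (a : SimplexCategory) : a ⟶ Q.obj a :=
  SimplexCategory.Hom.mk
    ⟨fun i => ⟨a.len + 1 + (i : ℕ), by
        have h : (i : ℕ) < a.len + 1 := i.isLt
        exact show a.len + 1 + (i : ℕ) < 2 * a.len + 1 + 1 by omega⟩,
      by intro i j hle; show a.len + 1 + (i : ℕ) ≤ a.len + 1 + (j : ℕ); have := Fin.le_def.mp hle; omega⟩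

/-- The natural transformation `id ⇒ Q` given by the last-segment inclusions
`[n] ⟶ [2n+1]`. -/
def Lnat : 𝟭 SimplexCategory ⟶ Q where
  app := Lhom
  naturality a b f := by
    apply SimplexCategory.Hom.ext
    apply OrderHom.ext
    funext i
    apply Fin.ext
    have hi : (i : ℕ) < a.len + 1 := i.isLt
    have h1 : (SimplexCategory.Hom.toOrderHom ((𝟭 SimplexCategory).map f ≫ Lhom b) i : ℕ)
        = b.len + 1 + (f.toOrderHom i : ℕ) := rfl
    have h4 : ((Lhom a).toOrderHom i : ℕ) = a.len + 1 + (i : ℕ) := rfl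
    have key : (SimplexCategory.Hom.toOrderHom (Lhom a ≫ Q.map f) i : ℕ)
        = b.len + 1 + (f.toOrderHom i : ℕ) := by
      have h3 : ¬ ((Lhom a).toOrderHom i : ℕ) ≤ a.len := by omega
      have h5 : (SimplexCategory.Hom.toOrderHom (Lhom a ≫ Q.map f) i : ℕ)
          = (Qfun f.toOrderHom ((Lhom a).toOrderHom i) : ℕ) := rfl
      rw [h5, Qfun_val_gt f.toOrderHom _ h3, h4,
        show a.len + 1 + (i : ℕ) - (a.len + 1) = (i : ℕ) by omega,
        natApp_of_le f.toOrderHom (show (i : ℕ) ≤ a.len by omega)]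
      exact congrArg (fun z : Fin (a.len + 1) => b.len + 1 + (f.toOrderHom z : ℕ))
        (Fin.ext rfl)
    exact h1.trans key.symm

/-- The map `cod_X : sd(X) ⟶ X` induced by the last-segment inclusions. -/
def codN (X : SSet.{0}) : sdF.obj X ⟶ X := Functor.whiskerRight (NatTrans.op Lnat) X

/-! ### Strict pullbacks of categories -/

/-- The strict pullback of a functor `p` along a functor `G`. -/
structure StrictPB {A B C : Type} [SmallCategory A] [SmallCategory B] [SmallCategory C]
    (G : A ⥤ C) (p : B ⥤ C) : Type where
  pt : A
  fib : B
  eq : p.obj fib = G.obj pt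

instance {A B C : Type} [SmallCategory A] [SmallCategory B] [SmallCategory C]
    (G : A ⥤ C) (p : B ⥤ C) : SmallCategory (StrictPB G p) where
  Hom x y := {fg : (x.pt ⟶ y.pt) × (x.fib ⟶ y.fib) //
    p.map fg.2 = eqToHom x.eq ≫ G.map fg.1 ≫ eqToHom y.eq.symm}
  id x := ⟨(𝟙 x.pt, 𝟙 x.fib), by simp⟩
  comp {x y z} f g := ⟨(f.1.1 ≫ g.1.1, f.1.2 ≫ g.1.2), by
    rw [p.map_comp, f.2, g.2, G.map_comp]
    simp⟩
  id_comp f := Subtype.ext (Prod.ext (Category.id_comp f.1.1) (Category.id_comp f.1.2))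
  comp_id f := Subtype.ext (Prod.ext (Category.comp_id f.1.1) (Category.comp_id f.1.2))
  assoc f g h := Subtype.ext (Prod.ext (Category.assoc _ _ _) (Category.assoc _ _ _))

/-- Projection of the strict pullback to the base. -/
def pbProj {A B C : Type} [SmallCategory A] [SmallCategory B] [SmallCategory C]
    (G : A ⥤ C) (p : B ⥤ C) : StrictPB G p ⥤ A where
  obj x := x.pt
  map f := f.1.1
  map_id x := rfl
  map_comp f g := rfl

/-! ### Auxiliary lemmas -/

lemma sigma_hom_eq {E : Type} [SmallCategory E] {y : E} {g₁ g₂ : Σ x : E, x ⟶ y}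
    (h : g₁ = g₂) : g₁.2 = eqToHom (congrArg Sigma.fst h) ≫ g₂.2 := by
  subst h; simp

lemma active_one_eq {m : ℕ} (f : SimplexCategory.mk 1 ⟶ SimplexCategory.mk m)
    (hf : IsActive f) : f = act1 m := by
  apply SimplexCategory.Hom.ext; apply OrderHom.ext; funext i
  match i with
  | ⟨0, _⟩ => exact hf.1
  | ⟨1, _⟩ => exact hf.2

def twoMap {n : ℕ} (a b : Fin (n + 1)) (h : a ≤ b) :
    SimplexCategory.mk 1 ⟶ SimplexCategory.mk n :=
  SimplexCategory.Hom.mk ⟨fun i => if (i : ℕ) = 0 then a else b, by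
    intro i j hij
    by_cases hi : (i : ℕ) = 0
    · by_cases hj : (j : ℕ) = 0 <;> simp [hi, hj, h]
    · have hj : (j : ℕ) ≠ 0 := by have := Fin.le_def.mp hij; omega
      simp [hi, hj]⟩

lemma act1_eq_Q_vert (n : ℕ) :
    act1 (2 * n + 1) = Q.map (vert n (Fin.last n)) := by
  apply SimplexCategory.Hom.ext; apply OrderHom.ext; funext i
  apply Fin.ext
  show ((act1 (2 * n + 1)).toOrderHom i : ℕ)
      = (Qfun (vert n (Fin.last n)).toOrderHom i : ℕ)
  have h0 : ∀ t : ℕ, natApp (vert n (Fin.last n)).toOrderHom t = n := fun t => rfl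
  match i with
  | ⟨0, h⟩ =>
    rw [Qfun_val_le _ _ (Nat.zero_le _), h0]
    show (0 : ℕ) = SimplexCategory.len (SimplexCategory.mk n) - n
    simp [SimplexCategory.len_mk]
  | ⟨1, h⟩ =>
    rw [Qfun_val_gt _ _ (by simp [SimplexCategory.len_mk]), h0]
    show (2 * n + 1 : ℕ) = SimplexCategory.len (SimplexCategory.mk n) + 1 + n
    simp [SimplexCategory.len_mk]; omega

/-! ### Lifting chains along a discrete fibration -/

section Lift

variable {F TD : Type} [SmallCategory F] [SmallCategory TD] {p : F ⥤ TD}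
  (hp : IsDiscreteFibration p)

noncomputable def liftArr {z : F} {c : TD} (f : c ⟶ p.obj z) : Σ x : F, x ⟶ z :=
  (hp z c f).choose

lemma liftArr_spec {z : F} {c : TD} (f : c ⟶ p.obj z) :
    ∃ h : p.obj (liftArr hp f).1 = c, p.map (liftArr hp f).2 = eqToHom h ≫ f :=
  (hp z c f).choose_spec.1

lemma liftArr_eq {z : F} {c : TD} (f : c ⟶ p.obj z) (g : Σ x : F, x ⟶ z)
    (hg : ∃ h : p.obj g.1 = c, p.map g.2 = eqToHom h ≫ f) : g = liftArr hp f :=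
  (hp z c f).choose_spec.2 g hg

variable {n : ℕ} (c : ComposableArrows TD n) (z : F) (hz : p.obj z = c.obj (Fin.last n))

noncomputable def liftO (i : Fin (n + 1)) : Σ x : F, x ⟶ z :=
  liftArr hp (c.map (homOfLE (Fin.le_last i)) ≫ eqToHom hz.symm)

lemma liftO_p (i : Fin (n + 1)) : p.obj (liftO hp c z hz i).1 = c.obj i :=
  (liftArr_spec hp _).choose

lemma liftO_map (i : Fin (n + 1)) :
    p.map (liftO hp c z hz i).2
      = eqToHom (liftO_p hp c z hz i) ≫ c.map (homOfLE (Fin.le_last i)) ≫ eqToHom hz.symm :=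
  (liftArr_spec hp (c.map (homOfLE (Fin.le_last i)) ≫ eqToHom hz.symm)).choose_spec

noncomputable def liftM {i j : Fin (n + 1)} (h : i ≤ j) :
    Σ x : F, x ⟶ (liftO hp c z hz j).1 :=
  liftArr hp (c.map (homOfLE h) ≫ eqToHom (liftO_p hp c z hz j).symm)

lemma liftM_p {i j : Fin (n + 1)} (h : i ≤ j) :
    p.obj (liftM hp c z hz h).1 = c.obj i :=
  (liftArr_spec hp _).choose

lemma liftM_map {i j : Fin (n + 1)} (h : i ≤ j) :
    p.map (liftM hp c z hz h).2
      = eqToHom (liftM_p hp c z hz h) ≫ c.map (homOfLE h)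
          ≫ eqToHom (liftO_p hp c z hz j).symm :=
  (liftArr_spec hp (c.map (homOfLE h) ≫ eqToHom (liftO_p hp c z hz j).symm)).choose_spec

lemma liftM_comp_liftO {i j : Fin (n + 1)} (h : i ≤ j) :
    (⟨(liftM hp c z hz h).1, (liftM hp c z hz h).2 ≫ (liftO hp c z hz j).2⟩ : Σ x : F, x ⟶ z)
      = liftO hp c z hz i := by
  apply liftArr_eq
  refine ⟨liftM_p hp c z hz h, ?_⟩
  rw [p.map_comp, liftM_map, liftO_map]
  simp only [Category.assoc, eqToHom_trans_assoc, eqToHom_refl, Category.id_comp]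
  rw [← Functor.map_comp_assoc, homOfLE_comp]

lemma liftM_fst {i j : Fin (n + 1)} (h : i ≤ j) :
    (liftM hp c z hz h).1 = (liftO hp c z hz i).1 :=
  congrArg Sigma.fst (liftM_comp_liftO hp c z hz h)

noncomputable def chainLift : ComposableArrows F n where
  obj i := (liftO hp c z hz i).1
  map {i j} g := eqToHom (liftM_fst hp c z hz (leOfHom g)).symm ≫ (liftM hp c z hz (leOfHom g)).2
  map_id i := by
    have he : (⟨(liftO hp c z hz i).1, 𝟙 _⟩ : Σ x : F, x ⟶ (liftO hp c z hz i).1)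
        = liftM hp c z hz (le_refl i) := by
      apply liftArr_eq
      refine ⟨liftO_p hp c z hz i, ?_⟩
      have hc : c.map (homOfLE (le_refl i)) = 𝟙 _ := c.map_id i
      rw [hc, p.map_id]
      simp
    exact (sigma_hom_eq he).symm
  map_comp {i j k} g g' := by
    have he : (⟨(liftO hp c z hz i).1,
        (eqToHom (liftM_fst hp c z hz (leOfHom g)).symm ≫ (liftM hp c z hz (leOfHom g)).2)
          ≫ eqToHom (liftM_fst hp c z hz (leOfHom g')).symm ≫ (liftM hp c z hz (leOfHom g')).2⟩
        : Σ x : F, x ⟶ (liftO hp c z hz k).1)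
        = liftM hp c z hz (leOfHom (g ≫ g')) := by
      apply liftArr_eq
      refine ⟨liftO_p hp c z hz i, ?_⟩
      simp only [Functor.map_comp, eqToHom_map, liftM_map]
      simp only [Category.assoc, eqToHom_trans_assoc, eqToHom_refl, Category.id_comp]
      rw [← Functor.map_comp_assoc, homOfLE_comp]
    exact (sigma_hom_eq he).symm

end Lift

section LiftProps

variable {F TD : Type} [SmallCategory F] [SmallCategory TD] {p : F ⥤ TD}
  (hp : IsDiscreteFibration p)
  {n : ℕ} (c : ComposableArrows TD n) (z : F) (hz : p.obj z = c.obj (Fin.last n))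

lemma chainLift_comp_p : chainLift hp c z hz ⋙ p = c := by
  apply ComposableArrows.ext (fun i => liftO_p hp c z hz i)
  intro i hi
  show p.map (eqToHom (liftM_fst hp c z hz _).symm ≫ (liftM hp c z hz _).2) = _
  rw [p.map_comp, eqToHom_map, liftM_map]
  simp only [eqToHom_trans_assoc]
  rfl

lemma liftO_last : liftO hp c z hz (Fin.last n) = ⟨z, 𝟙 z⟩ := by
  symm
  apply liftArr_eq
  refine ⟨hz, ?_⟩
  have hc : c.map (homOfLE (Fin.le_last (Fin.last n))) = 𝟙 _ := c.map_id _
  rw [hc, p.map_id]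
  simp

lemma chainLift_last : (chainLift hp c z hz).obj (Fin.last n) = z :=
  congrArg Sigma.fst (liftO_last hp c z hz)

set_option maxHeartbeats 2000000 in
lemma chainLift_unique (σ : ComposableArrows F n) (h1 : σ ⋙ p = c)
    (h2 : σ.obj (Fin.last n) = z) : σ = chainLift hp c z hz := by
  subst h1 h2
  have hzid : eqToHom hz.symm = 𝟙 ((σ ⋙ p).obj (Fin.last n)) := rfl
  have hobj : ∀ i : Fin (n + 1),
      (⟨σ.obj i, σ.map (homOfLE (Fin.le_last i))⟩ : Σ x : F, x ⟶ σ.obj (Fin.last n))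
        = liftO hp (σ ⋙ p) _ hz i := by
    intro i
    apply liftArr_eq
    refine ⟨rfl, ?_⟩
    rw [hzid, Category.comp_id]
    simp only [eqToHom_refl, Category.id_comp]
    rfl
  apply ComposableArrows.ext (fun i => congrArg Sigma.fst (hobj i))
  intro i hi
  have hle : (⟨i, by omega⟩ : Fin (n + 1)) ≤ ⟨i + 1, by omega⟩ := Fin.mk_le_mk.mpr (by omega)
  have hM : (⟨σ.obj ⟨i, by omega⟩,
      σ.map (homOfLE hle) ≫ eqToHom (congrArg Sigma.fst (hobj ⟨i + 1, by omega⟩))⟩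
      : Σ x : F, x ⟶ (liftO hp (σ ⋙ p) _ hz ⟨i + 1, by omega⟩).1)
      = liftM hp (σ ⋙ p) _ hz hle := by
    apply liftArr_eq
    refine ⟨rfl, ?_⟩
    rw [p.map_comp, eqToHom_map]
    simp only [eqToHom_refl, Category.id_comp]
    rfl
  have h3 := sigma_hom_eq hM
  have h4 : σ.map (homOfLE hle) = eqToHom (congrArg Sigma.fst hM)
      ≫ (liftM hp (σ ⋙ p) _ hz hle).2
      ≫ eqToHom (congrArg Sigma.fst (hobj ⟨i + 1, by omega⟩)).symm := by
    rw [← Category.assoc, ← h3]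
    simp [eqToHom_trans]
  show σ.map _ = _
  rw [h4]
  show _ = eqToHom _ ≫ (eqToHom _ ≫ (liftM hp (σ ⋙ p) _ hz _).2) ≫ eqToHom _
  simp only [Category.assoc, eqToHom_trans_assoc]
  erw [eqToHom_trans_assoc]

end LiftProps

/-! ### Key computations of `lamD` -/

lemma mk₁_eq_extract {C : Type} [SmallCategory C] {x y : C} (f : x ⟶ y)
    (G : ComposableArrows C 1) (h : ComposableArrows.mk₁ f = G) :
    f = eqToHom (congrArg (fun (H : ComposableArrows C 1) => H.obj 0) h)
        ≫ G.map' 0 1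
        ≫ eqToHom (congrArg (fun (H : ComposableArrows C 1) => H.obj 1) h).symm := by
  subst h
  show f = eqToHom rfl ≫ f ≫ eqToHom rfl
  simp

section Lam

variable {D : SSet.{0}} {TD : Type} [SmallCategory TD] (eD : nerve TD ≅ sdF.obj D)
  (lamD : El D ⥤ TD)
  {Λ : ∀ X : SSet.{0}, nerve (El X) ⟶ sdF.obj X} (hΛ : IsLambda Λ)
  (hlam : nerveFunctor.map (X := Cat.of (El D)) (Y := Cat.of TD) lamD.toCatHom ≫ eD.hom = Λ D)

lemma eD_inj (k : SimplexCategoryᵒᵖ) {x y : (nerve TD).obj k}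
    (h : eD.hom.app k x = eD.hom.app k y) : x = y := by
  have h1 := ConcreteCategory.congr_hom (NatTrans.congr_app eD.hom_inv_id k) x
  have h2 := ConcreteCategory.congr_hom (NatTrans.congr_app eD.hom_inv_id k) y
  simp only [NatTrans.comp_app] at h1 h2
  calc x = eD.inv.app k (eD.hom.app k x) := h1.symm
    _ = eD.inv.app k (eD.hom.app k y) := by rw [h]
    _ = y := h2

include hΛ hlam in
lemma lam_obj (x : El D) :
    eD.hom.app (op (SimplexCategory.mk 0)) (ComposableArrows.mk₀ (lamD.obj x))
      = D.map (act1 x.n).op x.σ := by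
  have h1 := ConcreteCategory.congr_hom (NatTrans.congr_app hlam (op (SimplexCategory.mk 0)))
    (ComposableArrows.mk₀ x)
  obtain ⟨α, ⟨hact, -⟩, hval⟩ := hΛ D 0 (ComposableArrows.mk₀ x)
  have hα : α (Fin.last 0) = act1 x.n := active_one_eq _ (hact _)
  have h2 : ComposableArrows.mk₀ x ⋙ lamD = ComposableArrows.mk₀ (lamD.obj x) :=
    ComposableArrows.ext₀ rfl
  refine (calc eD.hom.app (op (SimplexCategory.mk 0)) (ComposableArrows.mk₀ (lamD.obj x))
      = eD.hom.app (op (SimplexCategory.mk 0)) (ComposableArrows.mk₀ x ⋙ lamD) := by rw [h2]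
    _ = (Λ D).app (op (SimplexCategory.mk 0)) (ComposableArrows.mk₀ x) := h1).trans ?_
  exact hval.trans (by rw [hα]; rfl)

include hΛ hlam in
lemma K1 (n : ℕ) (c : ComposableArrows TD n) :
    lamD.obj ⟨2 * n + 1, eD.hom.app (op (SimplexCategory.mk n)) c⟩ = c.obj (Fin.last n) := by
  have h1 := lam_obj eD lamD hΛ hlam ⟨2 * n + 1, eD.hom.app (op (SimplexCategory.mk n)) c⟩
  rw [act1_eq_Q_vert] at h1
  have h2 : D.map (Q.map (vert n (Fin.last n))).op
        (eD.hom.app (op (SimplexCategory.mk n)) c)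
      = eD.hom.app (op (SimplexCategory.mk 0))
        ((nerve TD).map (vert n (Fin.last n)).op c) :=
    (FunctorToTypes.naturality eD.hom (vert n (Fin.last n)).op c).symm
  have h3 : (nerve TD).map (vert n (Fin.last n)).op c
      = ComposableArrows.mk₀ (c.obj (Fin.last n)) := ComposableArrows.ext₀ rfl
  have h4 := eD_inj eD _ (h1.trans (h2.trans (by rw [h3] : _ = eD.hom.app (op (SimplexCategory.mk 0))
    (ComposableArrows.mk₀ (c.obj (Fin.last n))))))
  exact congrArg (fun (G : ComposableArrows TD 0) => G.obj 0) h4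

end Lam

/-! ### Pointwise evaluation of `Qfun` -/

lemma Qfun_val_le' {m n : ℕ} (f : Fin (m + 1) →o Fin (n + 1)) (i : ℕ) (hi : i < 2 * m + 2)
    (t : Fin (m + 1)) (him : i ≤ m) (ht : m - i = (t : ℕ)) :
    (Qfun f ⟨i, hi⟩ : ℕ) = n - (f t : ℕ) := by
  have h1 : (Qfun f ⟨i, hi⟩ : ℕ) = n - natApp f (m - i) := Qfun_val_le f ⟨i, hi⟩ him
  rw [h1, ht, natApp_of_le _ (by omega : (t : ℕ) ≤ m)]

lemma Qfun_val_gt' {m n : ℕ} (f : Fin (m + 1) →o Fin (n + 1)) (i : ℕ) (hi : i < 2 * m + 2)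
    (t : Fin (m + 1)) (him : ¬ i ≤ m) (ht : i - (m + 1) = (t : ℕ)) :
    (Qfun f ⟨i, hi⟩ : ℕ) = n + 1 + (f t : ℕ) := by
  have h1 : (Qfun f ⟨i, hi⟩ : ℕ) = n + 1 + natApp f (i - (m + 1)) := Qfun_val_gt f ⟨i, hi⟩ him
  rw [h1, ht, natApp_of_le _ (by omega : (t : ℕ) ≤ m)]

section Lam2

variable {D : SSet.{0}} {TD : Type} [SmallCategory TD] (eD : nerve TD ≅ sdF.obj D)
  (lamD : El D ⥤ TD)
  {Λ : ∀ X : SSet.{0}, nerve (El X) ⟶ sdF.obj X} (hΛ : IsLambda Λ)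
  (hlam : nerveFunctor.map (X := Cat.of (El D)) (Y := Cat.of TD) lamD.toCatHom ≫ eD.hom = Λ D)

include hΛ hlam in
lemma K2 {m n : ℕ} (f : SimplexCategory.mk m ⟶ SimplexCategory.mk n)
    (c : ComposableArrows TD n) (τ : D.obj (op (SimplexCategory.mk (2 * m + 1))))
    (hτ : D.map (Q.map f).op (eD.hom.app (op (SimplexCategory.mk n)) c) = τ)
    (E1 : lamD.obj ⟨2 * m + 1, τ⟩ = c.obj (f.toOrderHom (Fin.last m)))
    (E2 : c.obj (Fin.last n)
      = lamD.obj ⟨2 * n + 1, eD.hom.app (op (SimplexCategory.mk n)) c⟩) :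
    lamD.map (⟨Q.map f, hτ⟩ : (⟨2 * m + 1, τ⟩ : El D) ⟶
        ⟨2 * n + 1, eD.hom.app (op (SimplexCategory.mk n)) c⟩)
      = eqToHom E1 ≫ c.map (homOfLE (Fin.le_last (f.toOrderHom (Fin.last m)))) ≫ eqToHom E2 := by
  set a := f.toOrderHom (Fin.last m) with ha
  set ψ : (⟨2 * m + 1, τ⟩ : El D) ⟶
      ⟨2 * n + 1, eD.hom.app (op (SimplexCategory.mk n)) c⟩ := ⟨Q.map f, hτ⟩ with hψ
  have h1 := ConcreteCategory.congr_hom (NatTrans.congr_app hlam (op (SimplexCategory.mk 1)))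
    (ComposableArrows.mk₁ ψ)
  have h2 : ComposableArrows.mk₁ ψ ⋙ lamD = ComposableArrows.mk₁ (lamD.map ψ) := by
    refine ComposableArrows.ext₁ rfl rfl ?_
    show lamD.map ψ = eqToHom rfl ≫ lamD.map ψ ≫ eqToHom rfl
    simp
  obtain ⟨α, ⟨hact, hcomm⟩, hval⟩ := hΛ D 1 (ComposableArrows.mk₁ ψ)
  have hα0 : α (Fin.castSucc 0) = act1 (2 * m + 1) := active_one_eq _ (hact _)
  have hchain : chainMap (ComposableArrows.mk₁ ψ) (0 : Fin 1) = Q.map f := rfl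
  have hl := hcomm 0
  rw [hα0, hchain] at hl
  have hl2 := congrArg SimplexCategory.Hom.toOrderHom hl
  simp only [SimplexCategory.comp_toOrderHom] at hl2
  have hpt : ∀ j,
      (α (Fin.succ 0)).toOrderHom
          ((Q.map (SimplexCategory.δ (Fin.last 1))).toOrderHom j)
        = (Q.map f).toOrderHom ((act1 (2 * m + 1)).toOrderHom j) := by
    intro j
    exact congrFun (congrArg (fun (g : _ →o _) => (g : _ → _)) hl2) j
  have eδ0 : ((Q.map (SimplexCategory.δ (Fin.last 1))).toOrderHom (0 : Fin 2)) = ⟨1, by decide⟩ := by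
    decide
  have eδ1 : ((Q.map (SimplexCategory.δ (Fin.last 1))).toOrderHom (1 : Fin 2)) = ⟨2, by decide⟩ := by
    decide
  have hQf0 : ((Q.map f).toOrderHom ((act1 (2 * m + 1)).toOrderHom (0 : Fin 2)) : ℕ)
      = n - (a : ℕ) := by
    show (@Qfun m n f.toOrderHom ⟨0, by omega⟩ : ℕ) = n - (a : ℕ)
    exact Qfun_val_le' _ 0 (by omega) (Fin.last m) (by omega) (by simp only [Fin.val_last]; omega)
  have hQf1 : ((Q.map f).toOrderHom ((act1 (2 * m + 1)).toOrderHom (1 : Fin 2)) : ℕ)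
      = n + 1 + (a : ℕ) := by
    show (@Qfun m n f.toOrderHom ⟨2 * m + 1, by omega⟩ : ℕ) = n + 1 + (a : ℕ)
    exact Qfun_val_gt' _ (2 * m + 1) (by omega) (Fin.last m) (by omega) (by simp only [Fin.val_last]; omega)
  have hα1 : α (Fin.succ 0) = Q.map (twoMap a (Fin.last n) (Fin.le_last a)) := by
    apply SimplexCategory.Hom.ext; apply OrderHom.ext; funext j
    obtain ⟨jv, hj⟩ := j
    have hj4 : jv < 4 := hj
    apply Fin.ext
    interval_cases jv
    · have R0 : (((Q.map (twoMap a (Fin.last n) (Fin.le_last a))).toOrderHom ⟨0, hj⟩) : ℕ)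
          = n - n := by
        show (@Qfun 1 n (twoMap a (Fin.last n) (Fin.le_last a)).toOrderHom ⟨0, by omega⟩ : ℕ) = _
        exact Qfun_val_le' _ 0 (by omega) ⟨1, by omega⟩ (by omega) rfl
      have hL : ((α (Fin.succ 0)).toOrderHom ⟨0, hj⟩ : ℕ) = 0 :=
        congrArg Fin.val (hact (Fin.succ 0)).1
      exact hL.trans ((by omega : (0 : ℕ) = n - n).trans R0.symm)
    · have R1 : (((Q.map (twoMap a (Fin.last n) (Fin.le_last a))).toOrderHom ⟨1, hj⟩) : ℕ)
          = n - (a : ℕ) := by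
        show (@Qfun 1 n (twoMap a (Fin.last n) (Fin.le_last a)).toOrderHom ⟨1, by omega⟩ : ℕ) = _
        exact Qfun_val_le' _ 1 (by omega) ⟨0, by omega⟩ (by omega) rfl
      have e := hpt 0
      erw [eδ0] at e
      exact (congrArg Fin.val e).trans (hQf0.trans R1.symm)
    · have R2 : (((Q.map (twoMap a (Fin.last n) (Fin.le_last a))).toOrderHom ⟨2, hj⟩) : ℕ)
          = n + 1 + (a : ℕ) := by
        show (@Qfun 1 n (twoMap a (Fin.last n) (Fin.le_last a)).toOrderHom ⟨2, by omega⟩ : ℕ) = _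
        exact Qfun_val_gt' _ 2 (by omega) ⟨0, by omega⟩ (by omega) rfl
      have e := hpt 1
      erw [eδ1] at e
      exact (congrArg Fin.val e).trans (hQf1.trans R2.symm)
    · have R3 : (((Q.map (twoMap a (Fin.last n) (Fin.le_last a))).toOrderHom ⟨3, hj⟩) : ℕ)
          = n + 1 + n := by
        show (@Qfun 1 n (twoMap a (Fin.last n) (Fin.le_last a)).toOrderHom ⟨3, by omega⟩ : ℕ) = _
        exact Qfun_val_gt' _ 3 (by omega) ⟨1, by omega⟩ (by omega) rfl
      have hL : ((α (Fin.succ 0)).toOrderHom ⟨3, hj⟩ : ℕ) = 2 * n + 1 :=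
        congrArg Fin.val (hact (Fin.succ 0)).2
      exact hL.trans ((by omega : 2 * n + 1 = n + 1 + n).trans R3.symm)
  have hval' : (Λ D).app (op (SimplexCategory.mk 1)) (ComposableArrows.mk₁ ψ)
      = D.map (α (Fin.succ 0)).op (eD.hom.app (op (SimplexCategory.mk n)) c) := hval
  rw [hα1] at hval'
  have h6 : D.map (Q.map (twoMap a (Fin.last n) (Fin.le_last a))).op
        (eD.hom.app (op (SimplexCategory.mk n)) c)
      = eD.hom.app (op (SimplexCategory.mk 1))
        ((nerve TD).map (twoMap a (Fin.last n) (Fin.le_last a)).op c) :=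
    (FunctorToTypes.naturality eD.hom (twoMap a (Fin.last n) (Fin.le_last a)).op c).symm
  have h7 : eD.hom.app (op (SimplexCategory.mk 1)) (ComposableArrows.mk₁ (lamD.map ψ))
      = eD.hom.app (op (SimplexCategory.mk 1))
        ((nerve TD).map (twoMap a (Fin.last n) (Fin.le_last a)).op c) := by
    rw [← h2]
    exact h1.trans (hval'.trans h6)
  have h8 := eD_inj eD _ h7
  have h9 := mk₁_eq_extract (lamD.map ψ) _ h8
  have h10 : ((nerve TD).map (twoMap a (Fin.last n) (Fin.le_last a)).op c).map' 0 1
      = c.map (homOfLE (Fin.le_last a)) := rfl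
  rw [h10] at h9
  exact h9

end Lam2

/-! ### Assembly -/

lemma pb_ext {A B C : Type} [SmallCategory A] [SmallCategory B] [SmallCategory C]
    {G : A ⥤ C} {p : B ⥤ C} {x y : StrictPB G p} (h1 : x.pt = y.pt) (h2 : x.fib = y.fib) :
    x = y := by
  cases x; cases y
  cases h1; cases h2
  rfl

lemma pb_hom_ext {A B C : Type} [SmallCategory A] [SmallCategory B] [SmallCategory C]
    {G : A ⥤ C} {p : B ⥤ C} (hp : IsDiscreteFibration p) {x y : StrictPB G p}
    (f g : x ⟶ y) (h : f.1.1 = g.1.1) : f = g := by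
  refine Subtype.ext (Prod.ext h ?_)
  have hpm : p.map f.1.2 = p.map g.1.2 := by rw [f.2, g.2, h]
  have h1 : (⟨x.fib, f.1.2⟩ : Σ z : B, z ⟶ y.fib) = ⟨x.fib, g.1.2⟩ :=
    (hp y.fib (p.obj x.fib) (p.map f.1.2)).unique ⟨rfl, by simp⟩ ⟨rfl, by simp [hpm]⟩
  have h2 := sigma_hom_eq h1
  rw [show eqToHom (congrArg Sigma.fst h1) = 𝟙 x.fib from rfl] at h2
  simpa using h2

lemma El_conj_val {X : SSet.{0}} {a b a' b' : El X} (h : a' = a) (h' : b = b') (g : a ⟶ b) :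
    (eqToHom h ≫ g ≫ eqToHom h').1
      = eqToHom (congrArg (fun s => SimplexCategory.mk s.n) h) ≫ g.1
          ≫ eqToHom (congrArg (fun s => SimplexCategory.mk s.n) h') := by
  subst h; subst h'; simp

lemma pb_conj_fst {A B C : Type} [SmallCategory A] [SmallCategory B] [SmallCategory C]
    {G : A ⥤ C} {p : B ⥤ C} {x y x' y' : StrictPB G p} (h : x' = x) (h' : y = y')
    (g : x ⟶ y) :
    (eqToHom h ≫ g ≫ eqToHom h').1.1
      = eqToHom (congrArg StrictPB.pt h) ≫ g.1.1 ≫ eqToHom (congrArg StrictPB.pt h') := by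
  subst h; subst h'; simp

lemma El_comp_eqToHom {X : SSet.{0}} {a b b' : El X} (h : b = b') (g : a ⟶ b) (g' : a ⟶ b')
    (hg : HEq g.1 g'.1) : g' = g ≫ eqToHom h := by
  subst h
  refine Subtype.ext ?_
  have h2 : ((g ≫ eqToHom rfl).1 : _) = g.1 ≫ 𝟙 _ := rfl
  rw [h2, Category.comp_id]
  exact (eq_of_heq hg).symm

section Assemble

variable {D : SSet.{0}} {TD : Type} [SmallCategory TD] (eD : nerve TD ≅ sdF.obj D)
  (lamD : El D ⥤ TD)
  {F : Type} [SmallCategory F] (p : F ⥤ TD) (hp : IsDiscreteFibration p)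

/-- The composite map `nerve F ⟶ sd D`. -/
def qmap : nerve F ⟶ sdF.obj D :=
  nerveFunctor.map (X := Cat.of F) (Y := Cat.of TD) p.toCatHom ≫ eD.hom

variable
  (K1' : ∀ (n : ℕ) (c : ComposableArrows TD n),
    lamD.obj ⟨2 * n + 1, eD.hom.app (op (SimplexCategory.mk n)) c⟩ = c.obj (Fin.last n))
  (K2' : ∀ {m n : ℕ} (f : SimplexCategory.mk m ⟶ SimplexCategory.mk n)
    (c : ComposableArrows TD n) (τ : D.obj (op (SimplexCategory.mk (2 * m + 1))))
    (hτ : D.map (Q.map f).op (eD.hom.app (op (SimplexCategory.mk n)) c) = τ)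
    (E1 : lamD.obj ⟨2 * m + 1, τ⟩ = c.obj (f.toOrderHom (Fin.last m)))
    (E2 : c.obj (Fin.last n)
      = lamD.obj ⟨2 * n + 1, eD.hom.app (op (SimplexCategory.mk n)) c⟩),
    lamD.map (⟨Q.map f, hτ⟩ : (⟨2 * m + 1, τ⟩ : El D) ⟶
        ⟨2 * n + 1, eD.hom.app (op (SimplexCategory.mk n)) c⟩)
      = eqToHom E1 ≫ c.map (homOfLE (Fin.le_last (f.toOrderHom (Fin.last m)))) ≫ eqToHom E2)

/-- The forward functor. -/
noncomputable def Phi : El (nerve F) ⥤ StrictPB (elSd D ⋙ lamD) p where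
  obj e :=
    { pt := ⟨e.n, (qmap eD p).app (op (SimplexCategory.mk e.n)) e.σ⟩
      fib := e.σ.obj (Fin.last e.n)
      eq := (K1' e.n (e.σ ⋙ p)).symm }
  map {e e'} φ := by
    refine ⟨(⟨φ.1, ?_⟩, eqToHom ((congrArg (fun s => s.obj (Fin.last e.n)) φ.2).symm)
        ≫ e'.σ.map (homOfLE (Fin.le_last (φ.1.toOrderHom (Fin.last e.n))))), ?_⟩
    · exact (FunctorToTypes.naturality (qmap eD p) φ.1.op e'.σ).symm.trans
        (congrArg ((qmap eD p).app _) φ.2)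
    · rw [conj_eqToHom_iff_heq']
      have hτ : D.map (Q.map φ.1).op
            (eD.hom.app (op (SimplexCategory.mk e'.n)) (e'.σ ⋙ p))
          = (qmap eD p).app (op (SimplexCategory.mk e.n)) e.σ :=
        (FunctorToTypes.naturality (qmap eD p) φ.1.op e'.σ).symm.trans
          (congrArg ((qmap eD p).app _) φ.2)
      have E1 : lamD.obj ⟨2 * e.n + 1, (qmap eD p).app (op (SimplexCategory.mk e.n)) e.σ⟩
          = (e'.σ ⋙ p).obj (φ.1.toOrderHom (Fin.last e.n)) :=
        (K1' e.n (e.σ ⋙ p)).trans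
          (congrArg p.obj ((congrArg (fun s => s.obj (Fin.last e.n)) φ.2).symm))
      have E2 : (e'.σ ⋙ p).obj (Fin.last e'.n)
          = lamD.obj ⟨2 * e'.n + 1, eD.hom.app (op (SimplexCategory.mk e'.n)) (e'.σ ⋙ p)⟩ :=
        (K1' e'.n (e'.σ ⋙ p)).symm
      have hmap := K2' φ.1 (e'.σ ⋙ p) _ hτ E1 E2
      refine HEq.trans ?_ (heq_of_eq hmap.symm)
      rw [p.map_comp]
      erw [eqToHom_map]
      exact (eqToHom_comp_heq_iff _ _ _).2 ((heq_eqToHom_comp_iff _ _ _).2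
        ((heq_comp_eqToHom_iff _ _ _).2 HEq.rfl))
  map_id e := pb_hom_ext hp _ _ (Subtype.ext rfl)
  map_comp f g := pb_hom_ext hp _ _ (Subtype.ext rfl)

end Assemble

section Assemble2

variable {D : SSet.{0}} {TD : Type} [SmallCategory TD] (eD : nerve TD ≅ sdF.obj D)
  (lamD : El D ⥤ TD)
  {F : Type} [SmallCategory F] (p : F ⥤ TD) (hp : IsDiscreteFibration p)
  (K1' : ∀ (n : ℕ) (c : ComposableArrows TD n),
    lamD.obj ⟨2 * n + 1, eD.hom.app (op (SimplexCategory.mk n)) c⟩ = c.obj (Fin.last n))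
  (K2' : ∀ {m n : ℕ} (f : SimplexCategory.mk m ⟶ SimplexCategory.mk n)
    (c : ComposableArrows TD n) (τ : D.obj (op (SimplexCategory.mk (2 * m + 1))))
    (hτ : D.map (Q.map f).op (eD.hom.app (op (SimplexCategory.mk n)) c) = τ)
    (E1 : lamD.obj ⟨2 * m + 1, τ⟩ = c.obj (f.toOrderHom (Fin.last m)))
    (E2 : c.obj (Fin.last n)
      = lamD.obj ⟨2 * n + 1, eD.hom.app (op (SimplexCategory.mk n)) c⟩),
    lamD.map (⟨Q.map f, hτ⟩ : (⟨2 * m + 1, τ⟩ : El D) ⟶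
        ⟨2 * n + 1, eD.hom.app (op (SimplexCategory.mk n)) c⟩)
      = eqToHom E1 ≫ c.map (homOfLE (Fin.le_last (f.toOrderHom (Fin.last m)))) ≫ eqToHom E2)

lemma hinv {k : ℕ} (τ : (sdF.obj D).obj (op (SimplexCategory.mk k))) :
    eD.hom.app (op (SimplexCategory.mk k)) (eD.inv.app (op (SimplexCategory.mk k)) τ) = τ := by
  have h := ConcreteCategory.congr_hom (NatTrans.congr_app eD.inv_hom_id (op (SimplexCategory.mk k))) τ
  simpa using h

include K1' in
lemma K1inv (k : ℕ) (τ : (sdF.obj D).obj (op (SimplexCategory.mk k))) :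
    lamD.obj ⟨2 * k + 1, τ⟩
      = (eD.inv.app (op (SimplexCategory.mk k)) τ).obj (Fin.last k) := by
  have h := K1' k (eD.inv.app (op (SimplexCategory.mk k)) τ)
  rw [hinv eD τ] at h
  exact h

/-- The underlying chain in `TD` of an object of the strict pullback. -/
def cinv (x : StrictPB (elSd D ⋙ lamD) p) : ComposableArrows TD x.pt.n :=
  eD.inv.app (op (SimplexCategory.mk x.pt.n)) x.pt.σ

include K1' in
lemma hz_pb (x : StrictPB (elSd D ⋙ lamD) p) :
    p.obj x.fib = (cinv eD lamD p x).obj (Fin.last x.pt.n) :=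
  x.eq.trans (K1inv eD lamD K1' x.pt.n x.pt.σ)

lemma hcx {x y : StrictPB (elSd D ⋙ lamD) p} (φ : x ⟶ y) :
    (nerve TD).map φ.1.1.1.op (cinv eD lamD p y) = cinv eD lamD p x :=
  (FunctorToTypes.naturality eD.inv φ.1.1.1.op y.pt.σ).symm.trans
    (congrArg (eD.inv.app (op (SimplexCategory.mk x.pt.n))) φ.1.1.2)

include K1' K2' in
lemma psi_fib {x y : StrictPB (elSd D ⋙ lamD) p} (φ : x ⟶ y) :
    (⟨x.fib, φ.1.2⟩ : Σ z : F, z ⟶ y.fib)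
      = liftO hp (cinv eD lamD p y) y.fib (hz_pb eD lamD p K1' y)
          (φ.1.1.1.toOrderHom (Fin.last x.pt.n)) := by
  apply liftArr_eq
  refine ⟨x.eq.trans ((K1inv eD lamD K1' x.pt.n x.pt.σ).trans
    (congrArg (fun c : ComposableArrows TD x.pt.n => c.obj (Fin.last x.pt.n)) (hcx eD lamD p φ).symm)), ?_⟩
  rw [conj_eqToHom_iff_heq']
  have hφ := φ.2
  rw [conj_eqToHom_iff_heq'] at hφ
  refine hφ.trans ?_
  have hτ : D.map (Q.map φ.1.1.1).op
        (eD.hom.app (op (SimplexCategory.mk y.pt.n)) (cinv eD lamD p y)) = x.pt.σ := by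
    show D.map (Q.map φ.1.1.1).op
        (eD.hom.app _ (eD.inv.app (op (SimplexCategory.mk y.pt.n)) y.pt.σ)) = x.pt.σ
    rw [hinv eD y.pt.σ]
    exact φ.1.1.2
  have E1 : lamD.obj ⟨2 * x.pt.n + 1, x.pt.σ⟩
      = (cinv eD lamD p y).obj (φ.1.1.1.toOrderHom (Fin.last x.pt.n)) :=
    (K1inv eD lamD K1' x.pt.n x.pt.σ).trans
      (congrArg (fun c : ComposableArrows TD x.pt.n => c.obj (Fin.last x.pt.n)) (hcx eD lamD p φ).symm)
  have E2 : (cinv eD lamD p y).obj (Fin.last y.pt.n)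
      = lamD.obj ⟨2 * y.pt.n + 1,
          eD.hom.app (op (SimplexCategory.mk y.pt.n)) (cinv eD lamD p y)⟩ :=
    (K1' y.pt.n (cinv eD lamD p y)).symm
  have hm := K2' φ.1.1.1 (cinv eD lamD p y) x.pt.σ hτ E1 E2
  have hcod : (⟨2 * y.pt.n + 1,
        eD.hom.app (op (SimplexCategory.mk y.pt.n)) (cinv eD lamD p y)⟩ : El D)
      = ⟨2 * y.pt.n + 1, y.pt.σ⟩ := by
    show (⟨2 * y.pt.n + 1,
        eD.hom.app _ (eD.inv.app (op (SimplexCategory.mk y.pt.n)) y.pt.σ)⟩ : El D) = _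
    rw [hinv eD y.pt.σ]
  have hsplit : (elSd D ⋙ lamD).map φ.1.1
      = lamD.map (⟨Q.map φ.1.1.1, hτ⟩ : (⟨2 * x.pt.n + 1, x.pt.σ⟩ : El D) ⟶
            ⟨2 * y.pt.n + 1, eD.hom.app (op (SimplexCategory.mk y.pt.n)) (cinv eD lamD p y)⟩)
          ≫ eqToHom (congrArg lamD.obj hcod) := by
    have h3 := El_comp_eqToHom hcod
      (⟨Q.map φ.1.1.1, hτ⟩ : (⟨2 * x.pt.n + 1, x.pt.σ⟩ : El D) ⟶
            ⟨2 * y.pt.n + 1, eD.hom.app (op (SimplexCategory.mk y.pt.n)) (cinv eD lamD p y)⟩)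
      ((elSd D).map φ.1.1) HEq.rfl
    rw [show (elSd D ⋙ lamD).map φ.1.1 = lamD.map ((elSd D).map φ.1.1) from rfl, h3]
    erw [lamD.map_comp, eqToHom_map]
    rfl
  rw [hsplit, hm]
  simp only [Category.assoc, eqToHom_trans, eqToHom_trans_assoc, eqToHom_comp_heq_iff,
    comp_eqToHom_heq_iff, heq_eqToHom_comp_iff, heq_comp_eqToHom_iff]
  exact (eqToHom_comp_heq_iff _ _ _).2 ((comp_eqToHom_heq_iff _ _ _).2 HEq.rfl)

include K1' K2' in
lemma psi_map_pf {x y : StrictPB (elSd D ⋙ lamD) p} (φ : x ⟶ y) :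
    (nerve F).map φ.1.1.1.op (chainLift hp (cinv eD lamD p y) y.fib (hz_pb eD lamD p K1' y))
      = chainLift hp (cinv eD lamD p x) x.fib (hz_pb eD lamD p K1' x) := by
  apply chainLift_unique
  · have h1 : ((nerve F).map φ.1.1.1.op
        (chainLift hp (cinv eD lamD p y) y.fib (hz_pb eD lamD p K1' y))) ⋙ p
      = (nerve TD).map φ.1.1.1.op
          ((chainLift hp (cinv eD lamD p y) y.fib (hz_pb eD lamD p K1' y)) ⋙ p) := rfl
    rw [h1, chainLift_comp_p]
    exact hcx eD lamD p φ
  · exact (congrArg Sigma.fst (psi_fib eD lamD p hp K1' @K2' φ)).symm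

/-- The inverse functor. -/
noncomputable def Psi : StrictPB (elSd D ⋙ lamD) p ⥤ El (nerve F) where
  obj x := ⟨x.pt.n, chainLift hp (cinv eD lamD p x) x.fib (hz_pb eD lamD p K1' x)⟩
  map {x y} φ := ⟨φ.1.1.1, psi_map_pf eD lamD p hp K1' @K2' φ⟩
  map_id x := Subtype.ext rfl
  map_comp f g := Subtype.ext rfl

end Assemble2

section Assemble3

variable {D : SSet.{0}} {TD : Type} [SmallCategory TD] (eD : nerve TD ≅ sdF.obj D)
  (lamD : El D ⥤ TD)
  {F : Type} [SmallCategory F] (p : F ⥤ TD) (hp : IsDiscreteFibration p)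
  (K1' : ∀ (n : ℕ) (c : ComposableArrows TD n),
    lamD.obj ⟨2 * n + 1, eD.hom.app (op (SimplexCategory.mk n)) c⟩ = c.obj (Fin.last n))
  (K2' : ∀ {m n : ℕ} (f : SimplexCategory.mk m ⟶ SimplexCategory.mk n)
    (c : ComposableArrows TD n) (τ : D.obj (op (SimplexCategory.mk (2 * m + 1))))
    (hτ : D.map (Q.map f).op (eD.hom.app (op (SimplexCategory.mk n)) c) = τ)
    (E1 : lamD.obj ⟨2 * m + 1, τ⟩ = c.obj (f.toOrderHom (Fin.last m)))
    (E2 : c.obj (Fin.last n)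
      = lamD.obj ⟨2 * n + 1, eD.hom.app (op (SimplexCategory.mk n)) c⟩),
    lamD.map (⟨Q.map f, hτ⟩ : (⟨2 * m + 1, τ⟩ : El D) ⟶
        ⟨2 * n + 1, eD.hom.app (op (SimplexCategory.mk n)) c⟩)
      = eqToHom E1 ≫ c.map (homOfLE (Fin.le_last (f.toOrderHom (Fin.last m)))) ≫ eqToHom E2)

lemma El_hom_heq {X : SSet.{0}} {a b a' b' : El X} (ha : a = a') (hb : b = b')
    (f : a ⟶ b) (f' : a' ⟶ b') (h : HEq f.1 f'.1) : HEq f f' := by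
  subst ha; subst hb
  exact heq_of_eq (Subtype.ext (eq_of_heq h))

lemma pb_hom_heq {X : SSet.{0}} {B C : Type} [SmallCategory B] [SmallCategory C]
    {G : El X ⥤ C} {p : B ⥤ C} (hp : IsDiscreteFibration p) {x y x' y' : StrictPB G p}
    (hx : x = x') (hy : y = y') (f : x ⟶ y) (f' : x' ⟶ y')
    (h : HEq f.1.1.1 f'.1.1.1) : HEq f f' := by
  subst hx; subst hy
  exact heq_of_eq (pb_hom_ext hp _ _ (Subtype.ext (eq_of_heq h)))

include K1' K2' in
lemma phi_psi_obj (e : El (nerve F)) :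
    (Psi eD lamD p hp K1' @K2').obj ((Phi eD lamD p hp K1' @K2').obj e) = e := by
  have h0 := ConcreteCategory.congr_hom (NatTrans.congr_app eD.hom_inv_id (op (SimplexCategory.mk e.n)))
    (e.σ ⋙ p)
  simp only [NatTrans.comp_app, types_comp_apply, NatTrans.id_app, types_id_apply] at h0
  have hu := chainLift_unique hp
    (cinv eD lamD p ((Phi eD lamD p hp K1' @K2').obj e))
    ((Phi eD lamD p hp K1' @K2').obj e).fib
    (hz_pb eD lamD p K1' ((Phi eD lamD p hp K1' @K2').obj e)) e.σ h0.symm rfl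
  exact congrArg (fun s => (⟨e.n, s⟩ : El (nerve F))) hu.symm

include K1' K2' in
lemma phi_psi : Phi eD lamD p hp K1' @K2' ⋙ Psi eD lamD p hp K1' @K2'
    = 𝟭 (El (nerve F)) :=
  Functor.hext (phi_psi_obj eD lamD p hp K1' @K2')
    (fun X Y f => El_hom_heq (phi_psi_obj eD lamD p hp K1' @K2' X)
      (phi_psi_obj eD lamD p hp K1' @K2' Y) _ _ HEq.rfl)

include K1' in
lemma psi_phi_obj (x : StrictPB (elSd D ⋙ lamD) p) :
    (Phi eD lamD p hp K1' @K2').obj ((Psi eD lamD p hp K1' @K2').obj x) = x := by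
  refine pb_ext ?_ ?_
  · have h1 : (qmap eD p).app (op (SimplexCategory.mk x.pt.n))
        (chainLift hp (cinv eD lamD p x) x.fib (hz_pb eD lamD p K1' x)) = x.pt.σ := by
      show eD.hom.app (op (SimplexCategory.mk x.pt.n))
        ((chainLift hp (cinv eD lamD p x) x.fib (hz_pb eD lamD p K1' x)) ⋙ p) = x.pt.σ
      rw [chainLift_comp_p]
      exact hinv eD x.pt.σ
    exact congrArg (fun s => (⟨x.pt.n, s⟩ : El (sdF.obj D))) h1
  · exact chainLift_last hp _ _ _

include K1' K2' in
lemma psi_phi : Psi eD lamD p hp K1' @K2' ⋙ Phi eD lamD p hp K1' @K2'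
    = 𝟭 (StrictPB (elSd D ⋙ lamD) p) :=
  Functor.hext (psi_phi_obj eD lamD p hp K1' @K2')
    (fun X Y f => pb_hom_heq hp (psi_phi_obj eD lamD p hp K1' @K2' X)
      (psi_phi_obj eD lamD p hp K1' @K2' Y) _ _ HEq.rfl)

end Assemble3
theorem statement16 {D : SSet.{0}} (hD : IsDecomp D)
    (Λ : ∀ X : SSet.{0}, nerve (El X) ⟶ sdF.obj X) (hΛ : IsLambda Λ)
    (TD : Type) [SmallCategory TD] (eD : nerve TD ≅ sdF.obj D)
    (lamD : El D ⥤ TD)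
    (hlam : nerveFunctor.map (X := Cat.of (El D)) (Y := Cat.of TD) lamD.toCatHom ≫ eD.hom = Λ D)
    (F : Type) [SmallCategory F] (p : F ⥤ TD) (hp : IsDiscreteFibration p) :
    ∃ Φ : Cat.of (El (nerve F)) ≅ Cat.of (StrictPB (elSd D ⋙ lamD) p),
      (Φ.hom.toFunctor ⋙ pbProj (elSd D ⋙ lamD) p
          = elMap (nerveFunctor.map (X := Cat.of F) (Y := Cat.of TD) p.toCatHom ≫ eD.hom)) ∧
        ∀ e : El (nerve F), (Φ.hom.toFunctor.obj e).fib = e.σ.obj (Fin.last e.n) := by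
    have K1' := K1 eD lamD hΛ hlam
    have K2' := @K2 D TD _ eD lamD Λ hΛ hlam
    refine ⟨⟨(Phi eD lamD p hp K1' @K2').toCatHom, (Psi eD lamD p hp K1' @K2').toCatHom,
      Cat.ext (phi_psi eD lamD p hp K1' @K2'), Cat.ext (psi_phi eD lamD p hp K1' @K2')⟩, ?_, ?_⟩
    · rfl
    · intro e
      rfl

end DecompPaper
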